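/- For every 0/1 polytope P ⊆ ℝ^n, every c ∈ ℝ^n, and every vertex x⁰ of P, there exists a finite sequence of vertices x⁰, x¹, …, x^k of P with k ≤ n such that for each i < k the vertices x^i and x^{i+1} are adjacent and ⟨c, x^i⟩ < ⟨c, x^{i+1}⟩, and x^k maximizes ⟨c,·⟩ over P. -/

import Mathlib

open Finset

attribute [local instance] Classical.propDecidable

noncomputable section

/-- Standard dot product on `Fin n → ℝ`. -/
def dotR {n : ℕ} (c x : Fin n → ℝ) : ℝ := ∑ i, c i * x i

/-- A polytope: the convex hull of a finite nonempty set of points. -/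
def IsPolytope {n : ℕ} (P : Set (Fin n → ℝ)) : Prop :=
  ∃ V : Finset (Fin n → ℝ), V.Nonempty ∧ P = convexHull ℝ (V : Set (Fin n → ℝ))

/-- A 0/1 polytope: the convex hull of a finite nonempty subset of `{0,1}^n`. -/
def IsPolytope01 {n : ℕ} (P : Set (Fin n → ℝ)) : Prop :=
  ∃ V : Finset (Fin n → ℝ), V.Nonempty ∧ (∀ w ∈ V, ∀ i, w i = 0 ∨ w i = 1) ∧
    P = convexHull ℝ (V : Set (Fin n → ℝ))

/-- A vertex of `P` is an extreme point of `P`. -/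
def IsVertex {n : ℕ} (P : Set (Fin n → ℝ)) (x : Fin n → ℝ) : Prop :=
  x ∈ P.extremePoints ℝ

/-- Two distinct vertices are adjacent when the segment between them is a face. -/
def Adjacent {n : ℕ} (P : Set (Fin n → ℝ)) (x y : Fin n → ℝ) : Prop :=
  IsVertex P x ∧ IsVertex P y ∧ x ≠ y ∧ IsExtreme ℝ P (segment ℝ x y)

/-- `u` is a `w`-improving neighbor of `x`. -/
def ImpNbr {n : ℕ} (P : Set (Fin n → ℝ)) (w x u : Fin n → ℝ) : Prop :=
  Adjacent P x u ∧ dotR w x < dotR w u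

/-- A Shadow-rule path on `P` with auxiliary vector `v` and objective `c`:
vertices `x 0, …, x k`, each step a `v`-improving neighbor maximizing the slope
`⟨c, u − xᵢ⟩ / ⟨v, u − xᵢ⟩` over all `v`-improving neighbors, and the last vertex
has no `v`-improving neighbor. -/
def ShadowPath {n : ℕ} (P : Set (Fin n → ℝ)) (c v : Fin n → ℝ) (k : ℕ)
    (x : ℕ → Fin n → ℝ) : Prop :=
  (∀ i ≤ k, IsVertex P (x i)) ∧
  (∀ i < k, ImpNbr P v (x i) (x (i + 1)) ∧
    ∀ u, ImpNbr P v (x i) u →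
      dotR c (u - x i) / dotR v (u - x i)
        ≤ dotR c (x (i + 1) - x i) / dotR v (x (i + 1) - x i)) ∧
  (∀ u, ¬ ImpNbr P v (x k) u)

/-- `f(u)` relative to `x0`: the largest index (in `1, …, n` labelling) where `u`
differs from `x0`, and `0` if there is none. -/
def lastIdx {n : ℕ} (x0 u : Fin n → ℝ) : ℕ :=
  (Finset.univ.filter fun j : Fin n => u j ≠ x0 j).sup fun j => (j : ℕ) + 1

/-- `f(w)` for a 0/1 vector: the largest index (in `1, …, n` labelling) with
`w j = 1`, and `0` for the zero vector. -/
def lastOne {n : ℕ} (w : Fin n → ℝ) : ℕ :=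
  (Finset.univ.filter fun j : Fin n => w j = 1).sup fun j => (j : ℕ) + 1

namespace MP01

variable {n : ℕ}

abbrev E (n : ℕ) := Fin n → ℝ

def Is01 (v : E n) : Prop := ∀ i, v i = 0 ∨ v i = 1

lemma isLinearMap_dotR (w : E n) : IsLinearMap ℝ (dotR w) := by
  constructor
  · intro x y; simp [dotR, mul_add, Finset.sum_add_distrib]
  · intro a x
    simp only [dotR, Pi.smul_apply, smul_eq_mul, Finset.mul_sum]
    exact Finset.sum_congr rfl fun i _ => by ring

lemma dotR_le_on_hull {V : Finset (E n)} {w : E n} {M : ℝ}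
    (h : ∀ v ∈ V, dotR w v ≤ M) {z : E n}
    (hz : z ∈ convexHull ℝ (V : Set (E n))) : dotR w z ≤ M := by
  have hsub : convexHull ℝ (V : Set (E n)) ⊆ {z | dotR w z ≤ M} :=
    convexHull_min (fun v hv => h v hv) (convex_halfSpace_le (isLinearMap_dotR w) M)
  exact hsub hz

lemma mem_extremePoints_of_01 {V : Finset (E n)} (hV : ∀ v ∈ V, Is01 v)
    {v : E n} (hv : v ∈ V) :
    v ∈ (convexHull ℝ (V : Set (E n))).extremePoints ℝ := by
  have hcube : convexHull ℝ (V : Set (E n)) ⊆ {x : E n | ∀ i, 0 ≤ x i ∧ x i ≤ 1} := by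
    apply convexHull_min
    · intro u hu i
      rcases hV u hu i with h | h <;> rw [h] <;> norm_num
    · intro x hx y hy a b ha hb hab i
      constructor
      · have := (hx i).1; have := (hy i).1
        have : 0 ≤ a * x i + b * y i := by positivity
        simpa using this
      · have h1 := (hx i).2; have h2 := (hy i).2
        have : a * x i + b * y i ≤ 1 := by nlinarith
        simpa using this
  rw [mem_extremePoints]
  refine ⟨subset_convexHull ℝ _ hv, ?_⟩
  intro x₁ h₁ x₂ h₂ hseg
  obtain ⟨a, b, ha, hb, hab, heq⟩ := hseg
  have key : ∀ i, x₁ i = v i ∧ x₂ i = v i := by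
    intro i
    have hco : a * x₁ i + b * x₂ i = v i := by
      have := congrFun heq i
      simpa using this
    have hx1 := hcube h₁ i
    have hx2 := hcube h₂ i
    rcases hV v hv i with h | h <;> rw [h] at hco ⊢ <;> constructor <;> nlinarith [hx1.1, hx1.2, hx2.1, hx2.2]
  exact ⟨funext fun i => (key i).1, funext fun i => (key i).2⟩

lemma mem_hull_filter {V : Finset (E n)} {w : E n} {M : ℝ}
    (hM : ∀ v ∈ V, dotR w v ≤ M) {z : E n}
    (hz : z ∈ convexHull ℝ (V : Set (E n))) (hzM : dotR w z = M) :
    z ∈ convexHull ℝ ((V.filter fun v => dotR w v = M : Finset (E n)) : Set (E n)) := by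
  rw [Finset.convexHull_eq] at hz ⊢
  obtain ⟨g, hg0, hg1, hgz⟩ := hz
  have hzsum : z = ∑ y ∈ V, g y • y := by
    rw [← hgz, Finset.centerMass_eq_of_sum_1 _ _ hg1]; rfl
  have hdot : dotR w z = ∑ y ∈ V, g y * dotR w y := by
    rw [hzsum]
    simp only [dotR, Finset.sum_apply, Pi.smul_apply, smul_eq_mul, Finset.mul_sum]
    rw [Finset.sum_comm]
    exact Finset.sum_congr rfl fun y _ => Finset.sum_congr rfl fun i _ => by ring
  have hzero : ∀ y ∈ V, g y * (M - dotR w y) = 0 := by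
    have hsum : ∑ y ∈ V, g y * (M - dotR w y) = 0 := by
      have : ∑ y ∈ V, g y * (M - dotR w y)
          = M * (∑ y ∈ V, g y) - ∑ y ∈ V, g y * dotR w y := by
        rw [Finset.mul_sum, ← Finset.sum_sub_distrib]
        exact Finset.sum_congr rfl fun y _ => by ring
      rw [this, hg1, ← hdot, hzM]; ring
    intro y hy
    have hnn : ∀ y ∈ V, 0 ≤ g y * (M - dotR w y) := fun y hy =>
      mul_nonneg (hg0 y hy) (by linarith [hM y hy])
    exact (Finset.sum_eq_zero_iff_of_nonneg hnn).1 hsum y hy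
  have hgz0 : ∀ y ∈ V, dotR w y ≠ M → g y = 0 := by
    intro y hy hne
    rcases mul_eq_zero.1 (hzero y hy) with h | h
    · exact h
    · exact absurd (by linarith : dotR w y = M) hne
  refine ⟨g, fun y hy => hg0 y (Finset.mem_filter.1 hy).1, ?_, ?_⟩
  · rw [← hg1]
    rw [← Finset.sum_filter_add_sum_filter_not V (fun v => dotR w v = M) g]
    have : ∑ y ∈ V.filter (fun v => ¬ dotR w v = M), g y = 0 :=
      Finset.sum_eq_zero fun y hy =>
        hgz0 y (Finset.mem_filter.1 hy).1 (Finset.mem_filter.1 hy).2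
    rw [this, add_zero]
  · have hsum1 : ∑ y ∈ V.filter (fun v => dotR w v = M), g y = 1 := by
      rw [← hg1, ← Finset.sum_filter_add_sum_filter_not V (fun v => dotR w v = M) g]
      have : ∑ y ∈ V.filter (fun v => ¬ dotR w v = M), g y = 0 :=
        Finset.sum_eq_zero fun y hy =>
          hgz0 y (Finset.mem_filter.1 hy).1 (Finset.mem_filter.1 hy).2
      rw [this, add_zero]
    rw [Finset.centerMass_eq_of_sum_1 _ _ hsum1]
    rw [hzsum]
    rw [← Finset.sum_filter_add_sum_filter_not V (fun v => dotR w v = M) (fun y => g y • y)]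
    have : ∑ y ∈ V.filter (fun v => ¬ dotR w v = M), g y • y = 0 :=
      Finset.sum_eq_zero fun y hy => by
        rw [hgz0 y (Finset.mem_filter.1 hy).1 (Finset.mem_filter.1 hy).2, zero_smul]
    rw [this, add_zero]
    rfl

lemma isExtreme_face {V : Finset (E n)} {w : E n} {M : ℝ}
    (hM : ∀ v ∈ V, dotR w v ≤ M) :
    IsExtreme ℝ (convexHull ℝ (V : Set (E n)))
      (convexHull ℝ ((V.filter fun v => dotR w v = M : Finset (E n)) : Set (E n))) := by
  constructor
  · exact convexHull_mono (by intro x hx; exact (Finset.mem_filter.1 hx).1)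
  · intro x₁ h₁ x₂ h₂ z hz hseg
    have hface : convexHull ℝ ((V.filter fun v => dotR w v = M : Finset (E n)) : Set (E n))
        ⊆ {x | dotR w x = M} :=
      convexHull_min (fun v hv => (Finset.mem_filter.1 hv).2)
        (convex_hyperplane (isLinearMap_dotR w) M)
    have hzM : dotR w z = M := hface hz
    obtain ⟨a, b, ha, hb, hab, heq⟩ := hseg
    have hd1 : dotR w x₁ ≤ M := dotR_le_on_hull hM h₁
    have hd2 : dotR w x₂ ≤ M := dotR_le_on_hull hM h₂
    have hco : a * dotR w x₁ + b * dotR w x₂ = M := by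
      have := congrArg (dotR w) heq
      rw [(isLinearMap_dotR w).map_add, (isLinearMap_dotR w).map_smul,
        (isLinearMap_dotR w).map_smul] at this
      simpa [hzM, smul_eq_mul] using this
    have habM : a * M + b * M = M := by rw [← add_mul, hab, one_mul]
    have hx1M : dotR w x₁ = M := by
      by_contra h
      have hlt : dotR w x₁ < M := lt_of_le_of_ne hd1 h
      linarith [mul_lt_mul_of_pos_left hlt ha, mul_le_mul_of_nonneg_left hd2 hb.le]
    have hx2M : dotR w x₂ = M := by
      by_contra h
      have hlt : dotR w x₂ < M := lt_of_le_of_ne hd2 h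
      linarith [mul_lt_mul_of_pos_left hlt hb, mul_le_mul_of_nonneg_left hd1 ha.le]
    exact mem_hull_filter hM h₁ hx1M

def Dham (u v : E n) : ℕ := (Finset.univ.filter fun i => u i ≠ v i).card

lemma dham_pos_of_ne {u v : E n} (h : u ≠ v) : 0 < Dham u v := by
  rw [Dham, Finset.card_pos]
  by_contra hne
  rw [Finset.not_nonempty_iff_eq_empty, Finset.filter_eq_empty_iff] at hne
  exact h (funext fun i => not_not.1 (hne (Finset.mem_univ i)))

lemma eq01_of_ne {a b c : ℝ} (ha : a = 0 ∨ a = 1) (hb : b = 0 ∨ b = 1)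
    (hc : c = 0 ∨ c = 1) (h1 : a ≠ c) (h2 : b ≠ c) : a = b := by
  rcases ha with h|h <;> rcases hb with h'|h' <;> rcases hc with h''|h'' <;> simp_all

lemma dotR_sub (w u v : E n) : dotR w u - dotR w v = ∑ i, w i * (u i - v i) := by
  simp [dotR, mul_sub, Finset.sum_sub_distrib]

lemma dot_w0 {x0 v : E n} (h0 : Is01 x0) (hv : Is01 v) :
    dotR (fun i => x0 i - 1/2) x0 - dotR (fun i => x0 i - 1/2) v = (Dham x0 v : ℝ) / 2 := by
  rw [dotR_sub]
  have hterm : ∀ i, (x0 i - 1/2) * (x0 i - v i) = if x0 i ≠ v i then (1:ℝ)/2 else 0 := by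
    intro i; rcases h0 i with h|h <;> rcases hv i with h'|h' <;> rw [h, h'] <;> norm_num
  rw [Finset.sum_congr rfl (fun i _ => hterm i), ← Finset.sum_filter]
  rw [Finset.sum_const, nsmul_eq_mul, Dham]
  ring

lemma dot_wPair {x0 y v : E n} (h0 : Is01 x0) (hy : Is01 y) (hv : Is01 v) :
    dotR (fun i => x0 i + y i - 1) x0 - dotR (fun i => x0 i + y i - 1) v
      = ((Finset.univ.filter fun i => x0 i = y i ∧ v i ≠ x0 i).card : ℝ) := by
  rw [dotR_sub]
  have hterm : ∀ i, (x0 i + y i - 1) * (x0 i - v i)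
      = if x0 i = y i ∧ v i ≠ x0 i then (1:ℝ) else 0 := by
    intro i
    rcases h0 i with h|h <;> rcases hy i with h'|h' <;> rcases hv i with h''|h'' <;>
      rw [h, h', h''] <;> norm_num
  rw [Finset.sum_congr rfl (fun i _ => hterm i), ← Finset.sum_filter]
  rw [Finset.sum_const, nsmul_eq_mul]
  ring

lemma dot_wPair_le {x0 y v : E n} (h0 : Is01 x0) (hy : Is01 y) (hv : Is01 v) :
    dotR (fun i => x0 i + y i - 1) v ≤ dotR (fun i => x0 i + y i - 1) x0 := by
  have h := dot_wPair h0 hy hv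
  have : (0:ℝ) ≤ ((Finset.univ.filter fun i => x0 i = y i ∧ v i ≠ x0 i).card : ℝ) :=
    Nat.cast_nonneg _
  linarith

lemma dot_wPair_eq_iff {x0 y v : E n} (h0 : Is01 x0) (hy : Is01 y) (hv : Is01 v) :
    dotR (fun i => x0 i + y i - 1) v = dotR (fun i => x0 i + y i - 1) x0
      ↔ ∀ i, x0 i = y i → v i = x0 i := by
  have h := dot_wPair h0 hy hv
  constructor
  · intro heq
    have hc : ((Finset.univ.filter fun i => x0 i = y i ∧ v i ≠ x0 i).card : ℝ) = 0 := by
      linarith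
    have hc0 : (Finset.univ.filter fun i => x0 i = y i ∧ v i ≠ x0 i).card = 0 := by
      exact_mod_cast hc
    rw [Finset.card_eq_zero, Finset.filter_eq_empty_iff] at hc0
    intro i hi
    by_contra hne
    exact hc0 (Finset.mem_univ i) ⟨hi, hne⟩
  · intro hagree
    have hc0 : (Finset.univ.filter fun i => x0 i = y i ∧ v i ≠ x0 i) = ∅ := by
      rw [Finset.filter_eq_empty_iff]
      intro i _ hcon
      exact hcon.2 (hagree i hcon.1)
    rw [hc0] at h
    simp only [Finset.card_empty, Nat.cast_zero] at h
    linarith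

lemma dotR_left_comb (c w0 : E n) (t : ℝ) (x : E n) :
    dotR (fun i => c i + t * w0 i) x = dotR c x + t * dotR w0 x := by
  simp only [dotR, Finset.mul_sum]
  rw [← Finset.sum_add_distrib]
  exact Finset.sum_congr rfl fun i _ => by ring

lemma improving_adjacent {V : Finset (E n)} (hV01 : ∀ v ∈ V, Is01 v) {x0 : E n}
    (hx0 : x0 ∈ V) {c : E n} (himp : ∃ v ∈ V, dotR c x0 < dotR c v) :
    ∃ y ∈ V, dotR c x0 < dotR c y ∧ Adjacent (convexHull ℝ (V : Set (E n))) x0 y := by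
  obtain ⟨v₁, hv₁V, hv₁⟩ := himp
  have hv₁ne : v₁ ≠ x0 := fun h => by rw [h] at hv₁; exact lt_irrefl _ hv₁
  set w0 : E n := fun i => x0 i - 1/2 with hw0
  have hδpos : ∀ v ∈ V, v ≠ x0 → 0 < dotR w0 x0 - dotR w0 v := by
    intro v hv hne
    rw [dot_w0 (hV01 x0 hx0) (hV01 v hv)]
    have hd : 0 < Dham x0 v := dham_pos_of_ne (Ne.symm hne)
    have : (0:ℝ) < (Dham x0 v : ℝ) := by exact_mod_cast hd
    linarith
  set tt : E n → ℝ := fun v => (dotR c v - dotR c x0) / (dotR w0 x0 - dotR w0 v) with htt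
  have hVe : (V.erase x0).Nonempty := ⟨v₁, Finset.mem_erase.2 ⟨hv₁ne, hv₁V⟩⟩
  obtain ⟨vb, hvbVe, hvbmax⟩ := Finset.exists_max_image (V.erase x0) tt hVe
  have hvbV : vb ∈ V := (Finset.mem_erase.1 hvbVe).2
  have hvbne : vb ≠ x0 := (Finset.mem_erase.1 hvbVe).1
  set ts := tt vb with hts
  have htspos : 0 < ts := by
    have h1 : 0 < tt v₁ := div_pos (by linarith) (hδpos v₁ hv₁V hv₁ne)
    exact lt_of_lt_of_le h1 (hvbmax v₁ (Finset.mem_erase.2 ⟨hv₁ne, hv₁V⟩))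
  set ws : E n := fun i => c i + ts * w0 i with hws
  have hkey : ∀ v ∈ V, v ≠ x0 →
      dotR ws x0 - dotR ws v = (dotR w0 x0 - dotR w0 v) * (ts - tt v) := by
    intro v hv hne
    have hδ := hδpos v hv hne
    have hcan : tt v * (dotR w0 x0 - dotR w0 v) = dotR c v - dotR c x0 :=
      div_mul_cancel₀ _ (ne_of_gt hδ)
    rw [hws]
    rw [dotR_left_comb, dotR_left_comb]
    linear_combination hcan
  have hmax : ∀ v ∈ V, dotR ws v ≤ dotR ws x0 := by
    intro v hv
    by_cases hne : v = x0
    · rw [hne]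
    · have h1 := hkey v hv hne
      have h2 := hδpos v hv hne
      have h3 : tt v ≤ ts := hvbmax v (Finset.mem_erase.2 ⟨hne, hv⟩)
      nlinarith
  set S := V.filter (fun v => dotR ws v = dotR ws x0) with hSdef
  have hx0S : x0 ∈ S := Finset.mem_filter.2 ⟨hx0, rfl⟩
  have hvbS : vb ∈ S := by
    refine Finset.mem_filter.2 ⟨hvbV, ?_⟩
    have h1 := hkey vb hvbV hvbne
    rw [← hts, sub_self, mul_zero] at h1
    linarith
  have hSimp : ∀ v ∈ S, v ≠ x0 → dotR c x0 < dotR c v := by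
    intro v hvS hne
    have hvV := (Finset.mem_filter.1 hvS).1
    have heq := (Finset.mem_filter.1 hvS).2
    have h1 := hkey v hvV hne
    have hδ := hδpos v hvV hne
    have h0 : (dotR w0 x0 - dotR w0 v) * (ts - tt v) = 0 := by
      rw [← h1, heq, sub_self]
    have httv : tt v = ts := by
      rcases mul_eq_zero.1 h0 with h | h
      · exact absurd h (ne_of_gt hδ)
      · linarith
    have hcan : tt v * (dotR w0 x0 - dotR w0 v) = dotR c v - dotR c x0 :=
      div_mul_cancel₀ _ (ne_of_gt hδ)
    nlinarith
  have hSe : (S.erase x0).Nonempty := ⟨vb, Finset.mem_erase.2 ⟨hvbne, hvbS⟩⟩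
  obtain ⟨y, hySe, hymin⟩ := Finset.exists_min_image (S.erase x0) (fun v => Dham x0 v) hSe
  have hyS : y ∈ S := (Finset.mem_erase.1 hySe).2
  have hyV : y ∈ V := (Finset.mem_filter.1 hyS).1
  have hyne : y ≠ x0 := (Finset.mem_erase.1 hySe).1
  have hycy : dotR c x0 < dotR c y := hSimp y hyS hyne
  set w2 : E n := fun i => x0 i + y i - 1 with hw2
  have hS01 : ∀ v ∈ S, Is01 v := fun v hv => hV01 v (Finset.mem_filter.1 hv).1
  have h001 := hV01 x0 hx0
  have hy01 := hV01 y hyV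
  have hM2 : ∀ v ∈ S, dotR w2 v ≤ dotR w2 x0 := fun v hv =>
    dot_wPair_le h001 hy01 (hS01 v hv)
  have hS2 : S.filter (fun v => dotR w2 v = dotR w2 x0) = {x0, y} := by
    apply Finset.ext; intro v
    simp only [Finset.mem_filter, Finset.mem_insert, Finset.mem_singleton]
    constructor
    · rintro ⟨hvS, hveq⟩
      by_cases hvx : v = x0
      · left; exact hvx
      · right
        have hag : ∀ i, x0 i = y i → v i = x0 i :=
          (dot_wPair_eq_iff h001 hy01 (hS01 v hvS)).1 hveq
        have hsub : (Finset.univ.filter fun i => x0 i ≠ v i)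
            ⊆ (Finset.univ.filter fun i => x0 i ≠ y i) := by
          intro i hi
          rw [Finset.mem_filter] at hi ⊢
          refine ⟨Finset.mem_univ i, fun hxy => ?_⟩
          exact hi.2 ((hag i hxy).symm)
        have hcard : Dham x0 y ≤ Dham x0 v :=
          hymin v (Finset.mem_erase.2 ⟨hvx, hvS⟩)
        have heqset : (Finset.univ.filter fun i => x0 i ≠ v i)
            = (Finset.univ.filter fun i => x0 i ≠ y i) :=
          Finset.eq_of_subset_of_card_le hsub hcard
        funext i
        by_cases hxy : x0 i = y i
        · rw [hag i hxy, hxy]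
        · have hiy : i ∈ (Finset.univ.filter fun i => x0 i ≠ y i) :=
            Finset.mem_filter.2 ⟨Finset.mem_univ i, hxy⟩
          rw [← heqset, Finset.mem_filter] at hiy
          exact eq01_of_ne (hS01 v hvS i) (hy01 i) (h001 i)
            (fun h => hiy.2 h.symm) (fun h => hxy h.symm)
    · rintro (rfl | rfl)
      · exact ⟨hx0S, rfl⟩
      · exact ⟨hyS, (dot_wPair_eq_iff h001 hy01 hy01).2 (fun i h => h.symm)⟩
  have hface1 : IsExtreme ℝ (convexHull ℝ (V : Set (E n))) (convexHull ℝ (S : Set (E n))) :=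
    isExtreme_face hmax
  have hface2 : IsExtreme ℝ (convexHull ℝ (S : Set (E n)))
      (convexHull ℝ ((S.filter (fun v => dotR w2 v = dotR w2 x0)) : Set (E n))) :=
    isExtreme_face hM2
  have hsegeq : convexHull ℝ ((S.filter (fun v => dotR w2 v = dotR w2 x0)) : Set (E n))
      = segment ℝ x0 y := by
    rw [hS2]
    have : (({x0, y} : Finset (E n)) : Set (E n)) = {x0, y} := by simp
    rw [this, convexHull_pair]
  rw [hsegeq] at hface2
  exact ⟨y, hyV, hycy, mem_extremePoints_of_01 hV01 hx0,
    mem_extremePoints_of_01 hV01 hyV, Ne.symm hyne, hface1.trans hface2⟩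

lemma eq_of_dham_zero {u v : E n} (h : Dham u v = 0) : u = v := by
  by_contra hne
  have := dham_pos_of_ne hne
  omega

lemma aux_path {V : Finset (E n)} (hV01 : ∀ v ∈ V, Is01 v) (c : E n) :
    ∀ N : ℕ, ∀ x0 ∈ V, ∀ xs ∈ V, (∀ v ∈ V, dotR c v ≤ dotR c xs) → Dham x0 xs ≤ N →
    ∃ k ≤ N, ∃ x : ℕ → E n, x 0 = x0 ∧ (∀ i ≤ k, x i ∈ V) ∧
      (∀ i < k, Adjacent (convexHull ℝ (V : Set (E n))) (x i) (x (i+1)) ∧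
        dotR c (x i) < dotR c (x (i+1))) ∧
      (∀ v ∈ V, dotR c v ≤ dotR c (x k)) := by
  intro N
  induction N with
  | zero =>
    intro x0 hx0 xs hxs hmax hD
    have hx0xs : x0 = xs := eq_of_dham_zero (Nat.le_zero.1 hD)
    refine ⟨0, le_refl _, fun _ => x0, rfl, fun i _ => hx0, fun i hi => absurd hi (Nat.not_lt_zero i), ?_⟩
    rw [hx0xs]; exact hmax
  | succ N ih =>
    intro x0 hx0 xs hxs hmax hD
    by_cases hopt : ∀ v ∈ V, dotR c v ≤ dotR c x0
    · exact ⟨0, Nat.zero_le _, fun _ => x0, rfl, fun i _ => hx0,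
        fun i hi => absurd hi (Nat.not_lt_zero i), hopt⟩
    push_neg at hopt
    obtain ⟨v0, hv0V, hv0⟩ := hopt
    have hx0lt : dotR c x0 < dotR c xs := lt_of_lt_of_le hv0 (hmax v0 hv0V)
    set V' := V.filter (fun v => ∀ i, x0 i = xs i → v i = x0 i) with hV'def
    have hx0' : x0 ∈ V' := Finset.mem_filter.2 ⟨hx0, fun i _ => rfl⟩
    have hxs' : xs ∈ V' := Finset.mem_filter.2 ⟨hxs, fun i h => h.symm⟩
    have hV'01 : ∀ v ∈ V', Is01 v := fun v hv => hV01 v (Finset.mem_filter.1 hv).1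
    obtain ⟨y, hyV', hcy, hadj'⟩ := improving_adjacent hV'01 hx0' ⟨xs, hxs', hx0lt⟩
    have hyV : y ∈ V := (Finset.mem_filter.1 hyV').1
    have hyag : ∀ i, x0 i = xs i → y i = x0 i := (Finset.mem_filter.1 hyV').2
    have hfaceV' : IsExtreme ℝ (convexHull ℝ (V : Set (E n)))
        (convexHull ℝ (V' : Set (E n))) := by
      have hMf : ∀ v ∈ V, dotR (fun i => x0 i + xs i - 1) v
          ≤ dotR (fun i => x0 i + xs i - 1) x0 := fun v hv =>
        dot_wPair_le (hV01 x0 hx0) (hV01 xs hxs) (hV01 v hv)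
      have hfe := isExtreme_face hMf
      have heqf : V.filter (fun v => dotR (fun i => x0 i + xs i - 1) v
          = dotR (fun i => x0 i + xs i - 1) x0) = V' := by
        apply Finset.ext; intro v
        simp only [Finset.mem_filter, hV'def]
        constructor
        · rintro ⟨hv, he⟩
          exact ⟨hv, (dot_wPair_eq_iff (hV01 x0 hx0) (hV01 xs hxs) (hV01 v hv)).1 he⟩
        · rintro ⟨hv, he⟩
          exact ⟨hv, (dot_wPair_eq_iff (hV01 x0 hx0) (hV01 xs hxs) (hV01 v hv)).2 he⟩
      rwa [heqf] at hfe
    have hadj : Adjacent (convexHull ℝ (V : Set (E n))) x0 y :=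
      ⟨mem_extremePoints_of_01 hV01 hx0, mem_extremePoints_of_01 hV01 hyV,
        hadj'.2.2.1, hfaceV'.trans hadj'.2.2.2⟩
    have hyne : y ≠ x0 := fun h => by rw [h] at hcy; exact lt_irrefl _ hcy
    have hDy : Dham y xs ≤ N := by
      have hsub : (Finset.univ.filter fun i => y i ≠ xs i)
          ⊆ (Finset.univ.filter fun i => x0 i ≠ xs i) := by
        intro i hi
        rw [Finset.mem_filter] at hi ⊢
        refine ⟨Finset.mem_univ i, fun hx => hi.2 ?_⟩
        rw [hyag i hx, hx]
      obtain ⟨i, hi⟩ : ∃ i, y i ≠ x0 i := by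
        by_contra hcon
        push_neg at hcon
        exact hyne (funext hcon)
      have hx0xs : x0 i ≠ xs i := fun h => hi (hyag i h)
      have hyxs : y i = xs i :=
        eq01_of_ne (hV01 y hyV i) (hV01 xs hxs i) (hV01 x0 hx0 i) hi
          (fun h => hx0xs h.symm)
      have hss : (Finset.univ.filter fun i => y i ≠ xs i)
          ⊂ (Finset.univ.filter fun i => x0 i ≠ xs i) := by
        refine Finset.ssubset_iff_of_subset hsub |>.2 ?_
        exact ⟨i, Finset.mem_filter.2 ⟨Finset.mem_univ i, hx0xs⟩,
          fun hmem => (Finset.mem_filter.1 hmem).2 hyxs⟩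
      have := Finset.card_lt_card hss
      have hDx : Dham x0 xs ≤ N + 1 := hD
      rw [Dham] at hDx ⊢
      omega
    obtain ⟨k', hk', x', hx'0, hx'V, hx'step, hx'max⟩ := ih y hyV xs hxs hmax hDy
    refine ⟨k' + 1, Nat.succ_le_succ hk',
      fun i => match i with | 0 => x0 | Nat.succ j => x' j, rfl, ?_, ?_, ?_⟩
    · intro i hi
      match i with
      | 0 => exact hx0
      | Nat.succ j => exact hx'V j (by omega)
    · intro i hi
      match i with
      | 0 =>
        refine ⟨?_, ?_⟩
        · show Adjacent _ x0 (x' 0)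
          rw [hx'0]; exact hadj
        · show dotR c x0 < dotR c (x' 0)
          rw [hx'0]; exact hcy
      | Nat.succ j => exact hx'step j (by omega)
    · exact hx'max

end MP01

/-- Monotone-path version of Theorem 1.2: from any vertex of a 0/1 polytope there is
a strictly `c`-monotone path of length at most `n` on the 1-skeleton ending at a
`c`-maximum. -/
theorem monotone_path_length_le_ambient_dim {n : ℕ} (P : Set (Fin n → ℝ))
    (hP : IsPolytope01 P) (c : Fin n → ℝ) (x0 : Fin n → ℝ) (hx0 : IsVertex P x0) :
    ∃ (k : ℕ) (x : ℕ → Fin n → ℝ), k ≤ n ∧ x 0 = x0 ∧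
      (∀ i ≤ k, IsVertex P (x i)) ∧
      (∀ i < k, Adjacent P (x i) (x (i + 1)) ∧ dotR c (x i) < dotR c (x (i + 1))) ∧
      ∀ y ∈ P, dotR c y ≤ dotR c (x k) := by
  obtain ⟨V, hVne, hV01, hPeq⟩ := hP
  subst hPeq
  have hx0V : x0 ∈ V := by
    have h := extremePoints_convexHull_subset hx0
    exact_mod_cast h
  obtain ⟨xs, hxsV, hxsmax⟩ := Finset.exists_max_image V (dotR c) hVne
  have hD : MP01.Dham x0 xs ≤ n := by
    have h1 := Finset.card_filter_le Finset.univ (fun i => x0 i ≠ xs i)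
    simpa [MP01.Dham, Finset.card_univ] using h1
  obtain ⟨k, hk, x, hx0eq, hxV, hstep, hmax⟩ :=
    MP01.aux_path hV01 c n x0 hx0V xs hxsV hxsmax hD
  refine ⟨k, x, hk, hx0eq,
    fun i hi => MP01.mem_extremePoints_of_01 hV01 (hxV i hi), hstep, ?_⟩
  intro y hy
  exact MP01.dotR_le_on_hull (fun v hv => hmax v hv) hy
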